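/- Every t-(v,k) trade T satisfies |found(T)| ≥ k + t + 1. -/
import Mathlib


/-- `T1, T2` form a `t`-`(v,k)` trade on the ground type `α` (the `v`-set):
two multisets of `k`-element blocks with no block in common, of positive
volume, such that every `t`-subset is contained in the same number of blocks
of `T1` as of `T2`. -/
def IsTrade {α : Type} [DecidableEq α] (t k : ℕ) (T1 T2 : Multiset (Finset α)) : Prop :=
  (∀ B ∈ T1, B.card = k) ∧
  (∀ B ∈ T2, B.card = k) ∧
  (∀ B ∈ T1, B ∉ T2) ∧
  T1 ≠ 0 ∧
  ∀ A : Finset α, A.card = t →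
    Multiset.countP (fun B => A ⊆ B) T1 = Multiset.countP (fun B => A ⊆ B) T2

/-- A Steiner trade: every `t`-subset appears in at most one block of each side. -/
def IsSteinerTrade {α : Type} [DecidableEq α] (t k : ℕ) (T1 T2 : Multiset (Finset α)) : Prop :=
  IsTrade t k T1 T2 ∧
  ∀ A : Finset α, A.card = t →
    Multiset.countP (fun B => A ⊆ B) T1 ≤ 1 ∧ Multiset.countP (fun B => A ⊆ B) T2 ≤ 1

/-- The foundation of a trade: all points covered by some block. -/
def foundation {α : Type} [DecidableEq α] (T1 T2 : Multiset (Finset α)) : Finset α :=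
  (T1 + T2).toFinset.biUnion id

/-- `rx T1 x`: the number of blocks of `T1` containing `x`. -/
def rx {α : Type} [DecidableEq α] (T1 : Multiset (Finset α)) (x : α) : ℕ :=
  Multiset.countP (fun B => x ∈ B) T1

/-- `lamxy T1 x y`: the number of blocks of `T1` containing both `x` and `y`. -/
def lamxy {α : Type} [DecidableEq α] (T1 : Multiset (Finset α)) (x y : α) : ℕ :=
  Multiset.countP (fun B => x ∈ B ∧ y ∈ B) T1

section Aux

variable {α : Type} [DecidableEq α] [Fintype α]

lemma sum_insert_countP (k : ℕ) (T : Multiset (Finset α)) (hk : ∀ B ∈ T, B.card = k)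
    (S : Finset α) :
    ∑ x ∈ Sᶜ, Multiset.countP (fun B => insert x S ⊆ B) T
      = (k - S.card) * Multiset.countP (fun B => S ⊆ B) T := by
  induction T using Multiset.induction with
  | empty => simp
  | cons B T ih =>
    have hB : B.card = k := hk B (Multiset.mem_cons_self _ _)
    have hk' : ∀ C ∈ T, C.card = k := fun C hC => hk C (Multiset.mem_cons_of_mem hC)
    simp only [Multiset.countP_cons]
    rw [Finset.sum_add_distrib, ih hk', Nat.mul_add]
    congr 1
    by_cases hSB : S ⊆ B
    · have h1 : ∀ x, (insert x S ⊆ B) ↔ (x ∈ B ∧ S ⊆ B) := fun x => Finset.insert_subset_iff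
      simp only [h1, hSB, and_true, if_pos]
      rw [Finset.sum_boole]
      have h2 : Sᶜ.filter (fun x => x ∈ B) = B \ S := by
        ext x; simp [Finset.mem_sdiff, and_comm]
      rw [h2, Finset.card_sdiff_of_subset hSB, hB]
      norm_cast
      omega
    · have h3 : ∀ x, ¬ (insert x S ⊆ B) := by
        intro x hx
        exact hSB ((Finset.subset_insert x S).trans hx)
      simp [h3, hSB]

lemma countP_subset_eq (t k : ℕ) (htk : t < k) (T1 T2 : Multiset (Finset α))
    (h1 : ∀ B ∈ T1, B.card = k) (h2 : ∀ B ∈ T2, B.card = k)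
    (ht : ∀ A : Finset α, A.card = t →
      Multiset.countP (fun B => A ⊆ B) T1 = Multiset.countP (fun B => A ⊆ B) T2) :
    ∀ d (S : Finset α), S.card + d = t →
      Multiset.countP (fun B => S ⊆ B) T1 = Multiset.countP (fun B => S ⊆ B) T2 := by
  intro d
  induction d with
  | zero => intro S hS; exact ht S (by omega)
  | succ d ih =>
    intro S hS
    have key : ∀ x ∈ Sᶜ, Multiset.countP (fun B => insert x S ⊆ B) T1
        = Multiset.countP (fun B => insert x S ⊆ B) T2 := by
      intro x hx
      exact ih (insert x S) (by rw [Finset.card_insert_of_notMem (Finset.mem_compl.mp hx)]; omega)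
    have h := Finset.sum_congr rfl key
    rw [sum_insert_countP k T1 h1 S, sum_insert_countP k T2 h2 S] at h
    have hpos : 0 < k - S.card := by omega
    exact Nat.eq_of_mul_eq_mul_left hpos h

lemma countP_inter_empty_eq_sum (T : Multiset (Finset α)) (A : Finset α) :
    (Multiset.countP (fun B => A ∩ B = ∅) T : ℤ)
      = ∑ S ∈ A.powerset, (-1 : ℤ) ^ S.card * (Multiset.countP (fun B => S ⊆ B) T : ℤ) := by
  induction T using Multiset.induction with
  | empty => simp
  | cons B T ih =>
    simp only [Multiset.countP_cons]
    push_cast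
    have hind : (if A ∩ B = ∅ then (1 : ℤ) else 0)
        = ∑ S ∈ A.powerset, (-1 : ℤ) ^ S.card * (if S ⊆ B then (1 : ℤ) else 0) := by
      have h4 : ∀ S ∈ A.powerset, (-1 : ℤ) ^ S.card * (if S ⊆ B then (1 : ℤ) else 0)
          = if S ⊆ B then (-1 : ℤ) ^ S.card else 0 := by
        intro S _; split <;> simp
      rw [Finset.sum_congr rfl h4, ← Finset.sum_filter]
      have hfe : A.powerset.filter (fun S => S ⊆ B) = (A ∩ B).powerset := by
        ext S
        rw [Finset.mem_filter, Finset.mem_powerset, Finset.mem_powerset,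
          Finset.subset_inter_iff]
      rw [hfe, Finset.sum_powerset_neg_one_pow_card]
    simp only [mul_add, Finset.sum_add_distrib, ← ih, ← hind]

end Aux

/-- Every `t`-`(v,k)` trade `T` satisfies `|found(T)| ≥ k + t + 1`. -/


theorem trade_foundation_lower_bound (v t k : ℕ) (ht : 0 < t) (htk : t < k) (hkv : k < v)
    (T1 T2 : Multiset (Finset (Fin v))) (hT : IsTrade t k T1 T2) :
    k + t + 1 ≤ (foundation T1 T2).card := by
  by_contra hcon
  push_neg at hcon
  obtain ⟨h1, h2, hdisj, hne, hcount⟩ := hT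
  obtain ⟨B₁, hB₁⟩ := Multiset.exists_mem_of_ne_zero hne
  have hsub : ∀ B ∈ T1 + T2, B ⊆ foundation T1 T2 := by
    intro B hB x hx
    exact Finset.mem_biUnion.mpr ⟨B, Multiset.mem_toFinset.mpr hB, hx⟩
  have hB₁sub : B₁ ⊆ foundation T1 T2 :=
    hsub B₁ (Multiset.mem_add.mpr (Or.inl hB₁))
  set F := foundation T1 T2 with hF
  set A := F \ B₁ with hA
  have hAcard : A.card ≤ t := by
    rw [hA, Finset.card_sdiff_of_subset hB₁sub, h1 B₁ hB₁]
    omega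
  -- counts of blocks disjoint from A agree
  have hkey : Multiset.countP (fun B => A ∩ B = ∅) T1
      = Multiset.countP (fun B => A ∩ B = ∅) T2 := by
    have e1 := countP_inter_empty_eq_sum T1 A
    have e2 := countP_inter_empty_eq_sum T2 A
    have hterms : ∀ S ∈ A.powerset,
        (-1 : ℤ) ^ S.card * (Multiset.countP (fun B => S ⊆ B) T1 : ℤ)
          = (-1 : ℤ) ^ S.card * (Multiset.countP (fun B => S ⊆ B) T2 : ℤ) := by
      intro S hS
      have hSA : S ⊆ A := Finset.mem_powerset.mp hS
      have hSt : S.card ≤ t := le_trans (Finset.card_le_card hSA) hAcard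
      have := countP_subset_eq t k htk T1 T2 h1 h2 hcount (t - S.card) S (by omega)
      rw [this]
    have : (Multiset.countP (fun B => A ∩ B = ∅) T1 : ℤ)
        = (Multiset.countP (fun B => A ∩ B = ∅) T2 : ℤ) := by
      rw [e1, e2]; exact Finset.sum_congr rfl hterms
    exact_mod_cast this
  have hpos : 0 < Multiset.countP (fun B => A ∩ B = ∅) T1 := by
    rw [Multiset.countP_pos]
    exact ⟨B₁, hB₁, by rw [hA]; exact Finset.sdiff_inter_self B₁ F⟩
  have hzero : Multiset.countP (fun B => A ∩ B = ∅) T2 = 0 := by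
    rw [Multiset.countP_eq_zero]
    intro B₂ hB₂ hd
    have hB₂sub : B₂ ⊆ F := hsub B₂ (Multiset.mem_add.mpr (Or.inr hB₂))
    have hB₂B₁ : B₂ ⊆ B₁ := by
      intro x hx
      have hxF : x ∈ F := hB₂sub hx
      by_contra hxB₁
      have : x ∈ A ∩ B₂ := Finset.mem_inter.mpr ⟨Finset.mem_sdiff.mpr ⟨hxF, hxB₁⟩, hx⟩
      rw [hd] at this
      exact absurd this (Finset.notMem_empty x)
    have : B₂ = B₁ := Finset.eq_of_subset_of_card_le hB₂B₁
      (by rw [h1 B₁ hB₁, h2 B₂ hB₂])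
    exact hdisj B₁ hB₁ (this ▸ hB₂)
  omega
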